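/- Let n ≥ 1, let M be a Hausdorff topological space (in the paper, a topological n-manifold), let A ⊆ M, and let φ : D^n → M be a topological embedding of the closed unit ball D^n ⊆ ℝ^n such that φ(S^{n-1}) ⊆ A and φ(D^n ∖ S^{n-1}) ⊆ M ∖ A. Write c = φ(D^n), ∂c = φ(S^{n-1}) and Int c = φ(D^n ∖ S^{n-1}). Let σ : ∂c → C(I,M) be continuous with σ(x)(0) = x for all x ∈ ∂c, with σ(x)(t) ∈ A for all t ∈ I, and with each path σ(x) either constant or satisfying σ(x)(t) = x only for t = 0. Let o ∈ Int c. Then there exists a continuous σ' : c → C(I,M) such that: σ'(x)(0) = x for all x ∈ c; σ' agrees with σ on ∂c; each path σ'(x) is either constant or satisfies σ'(x)(t) = x only for t = 0; and σ'(x) is non-constant for every x ∈ Int c ∖ {o}. Moreover, if σ(y) is the constant path for some y ∈ ∂c, then σ' can be chosen so that σ'(x) is non-constant for every x ∈ Int c. -/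

import Mathlib

open Set Metric RealInnerProductSpace

noncomputable section PFE
variable {n : ℕ}

def uv {n : ℕ} (p x : EuclideanSpace ℝ (Fin n)) : EuclideanSpace ℝ (Fin n) := ‖x - p‖⁻¹ • (x - p)
def cc {n : ℕ} (p x : EuclideanSpace ℝ (Fin n)) : ℝ := inner ℝ p (uv p x)
def RR {n : ℕ} (p x : EuclideanSpace ℝ (Fin n)) : ℝ :=
  -cc p x + Real.sqrt ((cc p x)^2 + 1 - ‖p‖^2)
def rr {n : ℕ} (p x : EuclideanSpace ℝ (Fin n)) : EuclideanSpace ℝ (Fin n) :=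
  p + RR p x • uv p x
def ss {n : ℕ} (p x : EuclideanSpace ℝ (Fin n)) : ℝ := ‖x - p‖ / RR p x

variable {p x : EuclideanSpace ℝ (Fin n)}

lemma norm_uv (hxp : x ≠ p) : ‖uv p x‖ = 1 := by
  rw [uv, norm_smul, norm_inv, norm_norm, inv_mul_cancel₀ (norm_ne_zero_iff.2 (sub_ne_zero.2 hxp))]

lemma norm_uv_le : ‖uv p x‖ ≤ 1 := by
  rcases eq_or_ne x p with h | h
  · simp [uv, h]
  · exact (norm_uv h).le

lemma abs_cc_le (hp : ‖p‖ ≤ 1) : |cc p x| ≤ 1 := by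
  calc |cc p x| ≤ ‖p‖ * ‖uv p x‖ := abs_real_inner_le_norm _ _
  _ ≤ 1 * 1 := mul_le_mul hp norm_uv_le (norm_nonneg _) zero_le_one
  _ = 1 := one_mul 1

lemma disc_nonneg (hp : ‖p‖ ≤ 1) : 0 ≤ (cc p x)^2 + 1 - ‖p‖^2 := by
  nlinarith [sq_nonneg (cc p x), norm_nonneg p]

lemma sqrt_disc_sq (hp : ‖p‖ ≤ 1) :
    Real.sqrt ((cc p x)^2 + 1 - ‖p‖^2) ^ 2 = (cc p x)^2 + 1 - ‖p‖^2 :=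
  Real.sq_sqrt (disc_nonneg hp)

lemma RR_nonneg (hp : ‖p‖ ≤ 1) : 0 ≤ RR p x := by
  have h1 : |cc p x| ≤ Real.sqrt ((cc p x)^2 + 1 - ‖p‖^2) := by
    rw [← Real.sqrt_sq_eq_abs]
    exact Real.sqrt_le_sqrt (by nlinarith [norm_nonneg p])
  have h2 := neg_abs_le (cc p x)
  have h3 := le_abs_self (cc p x)
  rw [RR]; linarith

lemma RR_quad (hp : ‖p‖ ≤ 1) : RR p x ^ 2 + 2 * cc p x * RR p x + ‖p‖^2 = 1 := by
  have h := sqrt_disc_sq (p := p) (x := x) hp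
  rw [RR]; nlinarith [h]

lemma norm_smul_uv : ‖x - p‖ • uv p x = x - p := by
  rcases eq_or_ne x p with h | h
  · simp [uv, h]
  · rw [uv, smul_smul, mul_inv_cancel₀ (norm_ne_zero_iff.2 (sub_ne_zero.2 h)), one_smul]

lemma norm_rr (hp : ‖p‖ ≤ 1) (hxp : x ≠ p) : ‖rr p x‖ = 1 := by
  have hu : ‖uv p x‖ = 1 := norm_uv hxp
  have hsq : ‖rr p x‖ ^ 2 = 1 := by
    rw [rr, norm_add_sq_real, real_inner_smul_right, norm_smul, Real.norm_eq_abs,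
      abs_of_nonneg (RR_nonneg hp), hu]
    have hq := RR_quad (p := p) (x := x) hp
    have hc : inner ℝ p (uv p x) = cc p x := rfl
    rw [hc]
    nlinarith [hq]
  nlinarith [norm_nonneg (rr p x)]

lemma rr_self : rr p p = p := by simp [rr, uv]

lemma expand_norm_sq (hxp : x ≠ p) :
    ‖x‖^2 = ‖x - p‖^2 + 2 * cc p x * ‖x - p‖ + ‖p‖^2 := by
  have hx' : x = p + ‖x - p‖ • uv p x := by rw [norm_smul_uv]; abel
  have hu : ‖uv p x‖ = 1 := norm_uv hxp
  calc ‖x‖^2 = ‖p + ‖x - p‖ • uv p x‖^2 := by rw [← hx']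
  _ = ‖p‖^2 + 2 * inner ℝ p (‖x - p‖ • uv p x) + ‖‖x - p‖ • uv p x‖^2 := norm_add_sq_real _ _
  _ = ‖x - p‖^2 + 2 * cc p x * ‖x - p‖ + ‖p‖^2 := by
      rw [real_inner_smul_right, norm_smul, Real.norm_eq_abs, abs_of_nonneg (norm_nonneg _), hu, cc]
      ring

lemma norm_sub_le_RR (hp : ‖p‖ ≤ 1) (hx : ‖x‖ ≤ 1) : ‖x - p‖ ≤ RR p x := by
  rcases eq_or_ne x p with h | h
  · simp [h, RR_nonneg hp]
  · have he := expand_norm_sq (p := p) h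
    have hx2 : ‖x‖^2 ≤ 1 := by nlinarith [norm_nonneg x]
    have hkey : (‖x - p‖ + cc p x)^2 ≤ (cc p x)^2 + 1 - ‖p‖^2 := by nlinarith
    have h2 : ‖x - p‖ + cc p x ≤ Real.sqrt ((cc p x)^2 + 1 - ‖p‖^2) := by
      have := Real.sqrt_le_sqrt hkey
      rw [Real.sqrt_sq_eq_abs] at this
      exact le_trans (le_abs_self _) this
    rw [RR]; linarith

lemma norm_sub_lt_RR (hp : ‖p‖ ≤ 1) (hx : ‖x‖ < 1) (hxp : x ≠ p) : ‖x - p‖ < RR p x := by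
  have he := expand_norm_sq (p := p) hxp
  have hx2 : ‖x‖^2 < 1 := by nlinarith [norm_nonneg x]
  have hkey : (‖x - p‖ + cc p x)^2 < (cc p x)^2 + 1 - ‖p‖^2 := by nlinarith
  have h2 : ‖x - p‖ + cc p x < Real.sqrt ((cc p x)^2 + 1 - ‖p‖^2) := by
    have := Real.sqrt_lt_sqrt (sq_nonneg _) hkey
    rw [Real.sqrt_sq_eq_abs] at this
    exact lt_of_le_of_lt (le_abs_self _) this
  rw [RR]; linarith

lemma norm_sub_eq_RR (hp : ‖p‖ ≤ 1) (hx : ‖x‖ = 1) (hxp : x ≠ p) : ‖x - p‖ = RR p x := by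
  have he := expand_norm_sq (p := p) hxp
  have hw : (0:ℝ) < ‖x - p‖ := norm_pos_iff.2 (sub_ne_zero.2 hxp)
  have hip : ⟪p, x - p⟫ = (1 - ⟪x, p⟫) - ‖x - p‖^2 := by
    have h1 : ⟪x, x - p⟫ = 1 - ⟪x, p⟫ := by
      rw [inner_sub_right, real_inner_self_eq_norm_sq, hx]; ring
    have h2 : ⟪x - p, x - p⟫ = ‖x - p‖^2 := real_inner_self_eq_norm_sq _
    have h3 : ⟪x, x - p⟫ = ⟪x - p, x - p⟫ + ⟪p, x - p⟫ := by
      rw [← inner_add_left]; norm_num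
    linarith
  have hxp1 : ⟪x, p⟫ ≤ 1 := by
    have := real_inner_le_norm x p
    nlinarith [this, hp, norm_nonneg p]
  have hcc : cc p x * ‖x - p‖ = ⟪p, x - p⟫ := by
    rw [cc, uv, real_inner_smul_right]; field_simp
  have hsum : 0 ≤ ‖x - p‖ + cc p x := by
    have hmul : (‖x - p‖ + cc p x) * ‖x - p‖ = 1 - ⟪x, p⟫ := by
      rw [add_mul, hcc, hip]; ring
    nlinarith [hw]
  have hkey : (‖x - p‖ + cc p x)^2 = (cc p x)^2 + 1 - ‖p‖^2 := by nlinarith [he, hx]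
  have h2 : ‖x - p‖ + cc p x = Real.sqrt ((cc p x)^2 + 1 - ‖p‖^2) := by
    rw [← hkey, Real.sqrt_sq hsum]
  rw [RR]; linarith

lemma RR_pos (hp : ‖p‖ ≤ 1) (hx : ‖x‖ ≤ 1) (hxp : x ≠ p) : 0 < RR p x :=
  lt_of_lt_of_le (norm_pos_iff.2 (sub_ne_zero.2 hxp)) (norm_sub_le_RR hp hx)

lemma ss_nonneg (hp : ‖p‖ ≤ 1) : 0 ≤ ss p x := div_nonneg (norm_nonneg _) (RR_nonneg hp)

lemma ss_self : ss p p = 0 := by simp [ss]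

lemma ss_le_one (hp : ‖p‖ ≤ 1) (hx : ‖x‖ ≤ 1) : ss p x ≤ 1 := by
  rcases eq_or_ne x p with h | h
  · simp [h, ss_self]
  · rw [ss, div_le_one (RR_pos hp hx h)]; exact norm_sub_le_RR hp hx

lemma ss_lt_one (hp : ‖p‖ ≤ 1) (hx : ‖x‖ < 1) (hxp : x ≠ p) : ss p x < 1 := by
  rw [ss, div_lt_one (RR_pos hp hx.le hxp)]; exact norm_sub_lt_RR hp hx hxp

lemma ss_eq_one (hp : ‖p‖ ≤ 1) (hx : ‖x‖ = 1) (hxp : x ≠ p) : ss p x = 1 := by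
  rw [ss, norm_sub_eq_RR hp hx hxp, div_self (RR_pos hp hx.le hxp).ne']

lemma ss_pos (hp : ‖p‖ ≤ 1) (hx : ‖x‖ ≤ 1) (hxp : x ≠ p) : 0 < ss p x :=
  div_pos (norm_pos_iff.2 (sub_ne_zero.2 hxp)) (RR_pos hp hx hxp)

lemma ss_smul (hp : ‖p‖ ≤ 1) (hx : ‖x‖ ≤ 1) : p + ss p x • (rr p x - p) = x := by
  rcases eq_or_ne x p with h | h
  · simp [h, ss_self]
  · rw [rr, add_sub_cancel_left, smul_smul, ss,
      div_mul_cancel₀ _ (RR_pos hp hx h).ne', norm_smul_uv]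
    abel

def mm {n : ℕ} (p x : EuclideanSpace ℝ (Fin n)) (t : ℝ) : ℝ :=
  min 1 (ss p x + t * min (ss p x) 2⁻¹)

def PP {n : ℕ} (p x : EuclideanSpace ℝ (Fin n)) (t : ℝ) : EuclideanSpace ℝ (Fin n) :=
  p + mm p x t • (rr p x - p)

variable {t : ℝ}

lemma mm_nonneg (hp : ‖p‖ ≤ 1) (ht : 0 ≤ t) : 0 ≤ mm p x t := by
  have h1 := ss_nonneg (p := p) (x := x) hp
  have : 0 ≤ min (ss p x) 2⁻¹ := le_min h1 (by norm_num)
  exact le_min zero_le_one (by nlinarith)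

lemma mm_le_one : mm p x t ≤ 1 := min_le_left _ _

lemma norm_rr_le (hp : ‖p‖ ≤ 1) : ‖rr p x‖ ≤ 1 := by
  rcases eq_or_ne x p with h | h
  · rw [h, rr_self]; exact hp
  · exact (norm_rr hp h).le

lemma norm_PP_le (hp : ‖p‖ ≤ 1) (ht : 0 ≤ t) : ‖PP p x t‖ ≤ 1 := by
  have h0 := mm_nonneg (p := p) (x := x) hp ht
  have h1 := mm_le_one (p := p) (x := x) (t := t)
  have hPP : PP p x t = (1 - mm p x t) • p + mm p x t • rr p x := by
    rw [PP]; rw [smul_sub, sub_smul, one_smul]; abel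
  rw [hPP]
  calc ‖(1 - mm p x t) • p + mm p x t • rr p x‖
      ≤ ‖(1 - mm p x t) • p‖ + ‖mm p x t • rr p x‖ := norm_add_le _ _
  _ = (1 - mm p x t) * ‖p‖ + mm p x t * ‖rr p x‖ := by
      rw [norm_smul, norm_smul, Real.norm_eq_abs, Real.norm_eq_abs,
        abs_of_nonneg (by linarith), abs_of_nonneg h0]
  _ ≤ 1 := by nlinarith [norm_rr_le (p := p) (x := x) hp, norm_nonneg p, norm_nonneg (rr p x)]

lemma mm_le_two_ss (hp : ‖p‖ ≤ 1) (ht0 : 0 ≤ t) (ht1 : t ≤ 1) : mm p x t ≤ 2 * ss p x := by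
  have h1 := ss_nonneg (p := p) (x := x) hp
  have h2 : min (ss p x) 2⁻¹ ≤ ss p x := min_le_left _ _
  have h3 : 0 ≤ min (ss p x) 2⁻¹ := le_min h1 (by norm_num)
  have : ss p x + t * min (ss p x) 2⁻¹ ≤ 2 * ss p x := by nlinarith
  exact le_trans (min_le_right _ _) this

lemma dist_PP_le (hp : ‖p‖ ≤ 1) (hx : ‖x‖ ≤ 1) (ht0 : 0 ≤ t) (ht1 : t ≤ 1) :
    ‖PP p x t - p‖ ≤ 2 * ‖x - p‖ := by
  rcases eq_or_ne x p with h | h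
  · simp [h, PP, rr_self]
  · have : PP p x t - p = mm p x t • (RR p x • uv p x) := by
      rw [PP, rr, add_sub_cancel_left, add_sub_cancel_left]
    rw [this, smul_smul, norm_smul, Real.norm_eq_abs,
      abs_of_nonneg (mul_nonneg (mm_nonneg hp ht0) (RR_nonneg hp)), norm_uv h, mul_one]
    have hR := RR_pos hp hx h
    have hm := mm_le_two_ss (p := p) (x := x) hp ht0 ht1
    have hsR : ss p x * RR p x = ‖x - p‖ := by
      rw [ss, div_mul_cancel₀ _ hR.ne']
    nlinarith [RR_nonneg (p := p) (x := x) hp]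

lemma mm_zero (hp : ‖p‖ ≤ 1) (hx : ‖x‖ ≤ 1) : mm p x 0 = ss p x := by
  rw [mm, zero_mul, add_zero, min_eq_right (ss_le_one hp hx)]

lemma PP_zero (hp : ‖p‖ ≤ 1) (hx : ‖x‖ ≤ 1) : PP p x 0 = x := by
  rw [PP, mm_zero hp hx, ss_smul hp hx]

lemma rr_sub_ne (hp : ‖p‖ ≤ 1) (hx : ‖x‖ ≤ 1) (hxp : x ≠ p) : rr p x - p ≠ 0 := by
  rw [rr, add_sub_cancel_left]
  exact smul_ne_zero (RR_pos hp hx hxp).ne' (by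
    intro h
    have := norm_uv (p := p) hxp
    rw [h, norm_zero] at this
    norm_num at this)

lemma PP_sub (hp : ‖p‖ ≤ 1) (hx : ‖x‖ ≤ 1) :
    PP p x t - x = (mm p x t - ss p x) • (rr p x - p) := by
  rw [PP]
  nth_rewrite 3 [← ss_smul (p := p) (x := x) hp hx]
  rw [sub_smul]
  abel

section Top
variable {M : Type*} [TopologicalSpace M]

def fmap (φ : ↥(Metric.closedBall (0 : EuclideanSpace ℝ (Fin n)) 1) → M)
    (σ : ↥(φ '' {x | ‖(x : EuclideanSpace ℝ (Fin n))‖ = 1}) → C(unitInterval, M))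
    (p : EuclideanSpace ℝ (Fin n)) (hp : ‖p‖ ≤ 1) :
    ↥(Metric.closedBall (0 : EuclideanSpace ℝ (Fin n)) 1) × unitInterval → M :=
  fun q =>
    if ss p q.1.1 + (q.2 : ℝ) * min (ss p q.1.1) 2⁻¹ ≤ 1 then
      φ ⟨PP p q.1.1 (q.2 : ℝ), mem_closedBall_zero_iff.2 (norm_PP_le hp q.2.2.1)⟩
    else if h1 : ‖rr p (q.1.1 : EuclideanSpace ℝ (Fin n))‖ = 1 then
      σ ⟨φ ⟨rr p q.1.1, mem_closedBall_zero_iff.2 h1.le⟩,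
          ⟨⟨rr p q.1.1, mem_closedBall_zero_iff.2 h1.le⟩, h1, rfl⟩⟩
        (Set.projIcc 0 1 zero_le_one ((q.2 : ℝ) + 2 * ss p q.1.1 - 2))
    else φ q.1

variable {φ : ↥(Metric.closedBall (0 : EuclideanSpace ℝ (Fin n)) 1) → M}
variable {σ : ↥(φ '' {x | ‖(x : EuclideanSpace ℝ (Fin n))‖ = 1}) → C(unitInterval, M)}
variable {x' : ↥(Metric.closedBall (0 : EuclideanSpace ℝ (Fin n)) 1)} {τ : unitInterval}

lemma fmap_zero (hp : ‖p‖ ≤ 1) : fmap φ σ p hp (x', 0) = φ x' := by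
  have hx1 : ‖(x' : EuclideanSpace ℝ (Fin n))‖ ≤ 1 := mem_closedBall_zero_iff.1 x'.2
  simp only [fmap]
  rw [if_pos (by
    simp only [Set.Icc.coe_zero, zero_mul, add_zero]
    exact ss_le_one hp hx1)]
  congr 1
  exact Subtype.ext (by simpa using PP_zero (p := p) hp hx1)

lemma fmap_at_p (hp : ‖p‖ ≤ 1) (hx'p : (x' : EuclideanSpace ℝ (Fin n)) = p) :
    fmap φ σ p hp (x', τ) = φ x' := by
  simp only [fmap]
  rw [if_pos (by rw [hx'p, ss_self]; simp)]
  congr 1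
  refine Subtype.ext ?_
  simp only [hx'p]
  rw [PP, rr_self, sub_self, smul_zero, add_zero]

lemma fmap_boundary (hp : ‖p‖ ≤ 1) (hσ0 : ∀ y, σ y 0 = (y : M))
    (hb : ‖(x' : EuclideanSpace ℝ (Fin n))‖ = 1)
    (hxp : (x' : EuclideanSpace ℝ (Fin n)) ≠ p) :
    fmap φ σ p hp (x', τ) = σ ⟨φ x', ⟨x', hb, rfl⟩⟩ τ := by
  have hx1 : ‖(x' : EuclideanSpace ℝ (Fin n))‖ ≤ 1 := hb.le
  have hs1 : ss p (x' : EuclideanSpace ℝ (Fin n)) = 1 := ss_eq_one hp hb hxp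
  have hrr : rr p (x' : EuclideanSpace ℝ (Fin n)) = (x' : EuclideanSpace ℝ (Fin n)) := by
    have h := ss_smul (p := p) (x := (x' : EuclideanSpace ℝ (Fin n))) hp hx1
    rw [hs1, one_smul, add_sub_cancel] at h
    exact h
  have ht0 : (0:ℝ) ≤ (τ : ℝ) := τ.2.1
  have ht1 : (τ : ℝ) ≤ 1 := τ.2.2
  rcases eq_or_lt_of_le ht0 with h0 | h0
  · have hτ : τ = 0 := Subtype.ext h0.symm
    rw [hτ, fmap_zero hp, hσ0]
  · simp only [fmap]
    rw [if_neg (by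
      rw [hs1, min_eq_right (by norm_num : (2⁻¹:ℝ) ≤ 1)]
      intro hcon
      nlinarith)]
    rw [dif_pos (show ‖rr p (x' : EuclideanSpace ℝ (Fin n))‖ = 1 by rw [hrr]; exact hb)]
    have hAB : ∀ (Z W : ↥(φ '' {x | ‖(x : EuclideanSpace ℝ (Fin n))‖ = 1})) (t1 t2 : unitInterval),
        Z = W → t1 = t2 → σ Z t1 = σ W t2 := by
      rintro Z W t1 t2 rfl rfl; rfl
    apply hAB
    · exact Subtype.ext (congrArg φ (Subtype.ext hrr))
    · rw [hs1]
      have : (τ : ℝ) + 2 * 1 - 2 = (τ : ℝ) := by ring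
      rw [this, Set.projIcc_val]

lemma fmap_nash (hp : ‖p‖ ≤ 1) (hinj : Function.Injective φ)
    (hlt : ‖(x' : EuclideanSpace ℝ (Fin n))‖ < 1)
    (hxp : (x' : EuclideanSpace ℝ (Fin n)) ≠ p)
    {A : Set M} (hAv : ∀ (y) (t : unitInterval), σ y t ∈ A) (hxA : φ x' ∉ A) :
    fmap φ σ p hp (x', τ) = φ x' → τ = 0 := by
  intro heq
  have hx1 : ‖(x' : EuclideanSpace ℝ (Fin n))‖ ≤ 1 := hlt.le
  simp only [fmap] at heq
  by_cases hcond : ss p (x' : EuclideanSpace ℝ (Fin n)) +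
      (τ : ℝ) * min (ss p (x' : EuclideanSpace ℝ (Fin n))) 2⁻¹ ≤ 1
  · rw [if_pos hcond] at heq
    have hPP : PP p (x' : EuclideanSpace ℝ (Fin n)) (τ : ℝ) = (x' : EuclideanSpace ℝ (Fin n)) :=
      congrArg Subtype.val (hinj heq)
    have hsub := PP_sub (p := p) (x := (x' : EuclideanSpace ℝ (Fin n))) (t := (τ : ℝ)) hp hx1
    rw [hPP, sub_self] at hsub
    rcases smul_eq_zero.1 hsub.symm with h | h
    · have hmm : mm p (x' : EuclideanSpace ℝ (Fin n)) (τ : ℝ)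
          = ss p (x' : EuclideanSpace ℝ (Fin n)) := by linarith [sub_eq_zero.1 h]
      rw [mm, min_eq_right hcond] at hmm
      have hmin : 0 < min (ss p (x' : EuclideanSpace ℝ (Fin n))) 2⁻¹ :=
        lt_min (ss_pos hp hx1 hxp) (by norm_num)
      have : (τ : ℝ) * min (ss p (x' : EuclideanSpace ℝ (Fin n))) 2⁻¹ = 0 := by linarith
      rcases mul_eq_zero.1 this with h' | h'
      · exact Subtype.ext h'
      · exact absurd h' hmin.ne'
    · exact absurd h (rr_sub_ne hp hx1 hxp)
  · rw [if_neg hcond, dif_pos (norm_rr hp hxp)] at heq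
    exact absurd (heq ▸ hAv _ _) hxA

lemma fmap_one_ne (hp : ‖p‖ ≤ 1) (hinj : Function.Injective φ)
    (hlt : ‖(x' : EuclideanSpace ℝ (Fin n))‖ < 1)
    (hxp : (x' : EuclideanSpace ℝ (Fin n)) ≠ p)
    {A : Set M} (hAv : ∀ (y) (t : unitInterval), σ y t ∈ A) (hxA : φ x' ∉ A) :
    fmap φ σ p hp (x', 1) ≠ φ x' := by
  intro heq
  have := fmap_nash (τ := 1) hp hinj hlt hxp hAv hxA heq
  have h01 : (0 : unitInterval) ≠ 1 := by
    intro h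
    have := congrArg Subtype.val h
    norm_num at this
  exact h01 this.symm

lemma fmap_continuousOn (hp : ‖p‖ ≤ 1) (hφc : Continuous φ) (hσc : Continuous σ)
    (hσ0 : ∀ y, σ y 0 = (y : M)) :
    ContinuousOn (fmap φ σ p hp)
      {q : ↥(Metric.closedBall (0 : EuclideanSpace ℝ (Fin n)) 1) × unitInterval |
        (q.1 : EuclideanSpace ℝ (Fin n)) ≠ p} := by
  set S : Set (↥(Metric.closedBall (0 : EuclideanSpace ℝ (Fin n)) 1) × unitInterval) :=
    {q | (q.1 : EuclideanSpace ℝ (Fin n)) ≠ p} with hS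
  rw [continuousOn_iff_continuous_restrict]
  have hv : Continuous fun q : S => (q.1.1 : EuclideanSpace ℝ (Fin n)) :=
    continuous_subtype_val.comp (continuous_fst.comp continuous_subtype_val)
  have hxm : ∀ q : S, ‖(q.1.1 : EuclideanSpace ℝ (Fin n))‖ ≤ 1 :=
    fun q => mem_closedBall_zero_iff.1 q.1.1.2
  have hne : ∀ q : S, (q.1.1 : EuclideanSpace ℝ (Fin n)) ≠ p := fun q => q.2
  have hnorm : Continuous fun q : S => ‖(q.1.1 : EuclideanSpace ℝ (Fin n)) - p‖ :=
    (hv.sub continuous_const).norm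
  have hinv : Continuous fun q : S => ‖(q.1.1 : EuclideanSpace ℝ (Fin n)) - p‖⁻¹ :=
    hnorm.inv₀ fun q => norm_ne_zero_iff.2 (sub_ne_zero.2 (hne q))
  have huv : Continuous fun q : S => uv p (q.1.1 : EuclideanSpace ℝ (Fin n)) :=
    hinv.smul (hv.sub continuous_const)
  have hcc : Continuous fun q : S => cc p (q.1.1 : EuclideanSpace ℝ (Fin n)) :=
    continuous_const.inner huv
  have hRR : Continuous fun q : S => RR p (q.1.1 : EuclideanSpace ℝ (Fin n)) :=
    hcc.neg.add (Real.continuous_sqrt.comp (((hcc.pow 2).add continuous_const).sub continuous_const))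
  have hrr : Continuous fun q : S => rr p (q.1.1 : EuclideanSpace ℝ (Fin n)) :=
    continuous_const.add (hRR.smul huv)
  have hss : Continuous fun q : S => ss p (q.1.1 : EuclideanSpace ℝ (Fin n)) :=
    hnorm.div hRR fun q => (RR_pos hp (hxm q) (hne q)).ne'
  have ht : Continuous fun q : S => ((q.1.2 : unitInterval) : ℝ) :=
    continuous_subtype_val.comp (continuous_snd.comp continuous_subtype_val)
  have hcond : Continuous fun q : S => ss p (q.1.1 : EuclideanSpace ℝ (Fin n)) +
      ((q.1.2 : unitInterval) : ℝ) * min (ss p (q.1.1 : EuclideanSpace ℝ (Fin n))) 2⁻¹ :=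
    hss.add (ht.mul (hss.min continuous_const))
  have hmm : Continuous fun q : S => mm p (q.1.1 : EuclideanSpace ℝ (Fin n))
      ((q.1.2 : unitInterval) : ℝ) := continuous_const.min hcond
  have hPP : Continuous fun q : S => PP p (q.1.1 : EuclideanSpace ℝ (Fin n))
      ((q.1.2 : unitInterval) : ℝ) :=
    continuous_const.add (hmm.smul (hrr.sub continuous_const))
  have hB1 : Continuous fun q : S =>
      φ ⟨PP p (q.1.1 : EuclideanSpace ℝ (Fin n)) ((q.1.2 : unitInterval) : ℝ),
        mem_closedBall_zero_iff.2 (norm_PP_le hp q.1.2.2.1)⟩ :=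
    hφc.comp (hPP.subtype_mk _)
  have hz : Continuous fun q : S =>
      (⟨φ ⟨rr p (q.1.1 : EuclideanSpace ℝ (Fin n)),
          mem_closedBall_zero_iff.2 (norm_rr hp (hne q)).le⟩,
        ⟨⟨rr p (q.1.1 : EuclideanSpace ℝ (Fin n)),
          mem_closedBall_zero_iff.2 (norm_rr hp (hne q)).le⟩, norm_rr hp (hne q), rfl⟩⟩ :
        ↥(φ '' {x | ‖(x : EuclideanSpace ℝ (Fin n))‖ = 1})) :=
    (hφc.comp (hrr.subtype_mk _)).subtype_mk _
  have hτ : Continuous fun q : S => Set.projIcc (0:ℝ) 1 zero_le_one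
      (((q.1.2 : unitInterval) : ℝ) + 2 * ss p (q.1.1 : EuclideanSpace ℝ (Fin n)) - 2) :=
    continuous_projIcc.comp ((ht.add (continuous_const.mul hss)).sub continuous_const)
  have hB2 : Continuous fun q : S =>
      σ (⟨φ ⟨rr p (q.1.1 : EuclideanSpace ℝ (Fin n)),
          mem_closedBall_zero_iff.2 (norm_rr hp (hne q)).le⟩,
        ⟨⟨rr p (q.1.1 : EuclideanSpace ℝ (Fin n)),
          mem_closedBall_zero_iff.2 (norm_rr hp (hne q)).le⟩, norm_rr hp (hne q), rfl⟩⟩)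
        (Set.projIcc (0:ℝ) 1 zero_le_one
          (((q.1.2 : unitInterval) : ℝ) + 2 * ss p (q.1.1 : EuclideanSpace ℝ (Fin n)) - 2)) :=
    continuous_eval.comp ((hσc.comp hz).prodMk hτ)
  have hres : S.domRestrict (fmap φ σ p hp) = fun q : S =>
      if ss p (q.1.1 : EuclideanSpace ℝ (Fin n)) +
          ((q.1.2 : unitInterval) : ℝ) * min (ss p (q.1.1 : EuclideanSpace ℝ (Fin n))) 2⁻¹ ≤ 1 then
        φ ⟨PP p (q.1.1 : EuclideanSpace ℝ (Fin n)) ((q.1.2 : unitInterval) : ℝ),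
          mem_closedBall_zero_iff.2 (norm_PP_le hp q.1.2.2.1)⟩
      else
        σ (⟨φ ⟨rr p (q.1.1 : EuclideanSpace ℝ (Fin n)),
            mem_closedBall_zero_iff.2 (norm_rr hp (hne q)).le⟩,
          ⟨⟨rr p (q.1.1 : EuclideanSpace ℝ (Fin n)),
            mem_closedBall_zero_iff.2 (norm_rr hp (hne q)).le⟩, norm_rr hp (hne q), rfl⟩⟩)
          (Set.projIcc (0:ℝ) 1 zero_le_one
            (((q.1.2 : unitInterval) : ℝ) + 2 * ss p (q.1.1 : EuclideanSpace ℝ (Fin n)) - 2)) := by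
    funext q
    simp only [Set.domRestrict, fmap]
    by_cases h : ss p (q.1.1 : EuclideanSpace ℝ (Fin n)) +
        ((q.1.2 : unitInterval) : ℝ) * min (ss p (q.1.1 : EuclideanSpace ℝ (Fin n))) 2⁻¹ ≤ 1
    · rw [if_pos h, if_pos h]
    · rw [if_neg h, if_neg h, dif_pos (norm_rr hp (hne q))]
  rw [hres]
  apply Continuous.if_le hB1 hB2 hcond continuous_const
  · intro q hq
    -- agreement on the frontier
    have hx1 := hxm q
    have hxp := hne q
    have hsnn := ss_nonneg (p := p) (x := (q.1.1 : EuclideanSpace ℝ (Fin n))) hp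
    have ht0 : (0:ℝ) ≤ ((q.1.2 : unitInterval) : ℝ) := q.1.2.2.1
    have ht1 : ((q.1.2 : unitInterval) : ℝ) ≤ 1 := q.1.2.2.2
    have hs_half : 2⁻¹ ≤ ss p (q.1.1 : EuclideanSpace ℝ (Fin n)) := by
      by_contra hlt
      push_neg at hlt
      have hmin : min (ss p (q.1.1 : EuclideanSpace ℝ (Fin n))) 2⁻¹
          = ss p (q.1.1 : EuclideanSpace ℝ (Fin n)) := min_eq_left hlt.le
      rw [hmin] at hq
      nlinarith
    have hmin : min (ss p (q.1.1 : EuclideanSpace ℝ (Fin n))) 2⁻¹ = 2⁻¹ := min_eq_right hs_half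
    rw [hmin] at hq
    have hτ0 : ((q.1.2 : unitInterval) : ℝ) + 2 * ss p (q.1.1 : EuclideanSpace ℝ (Fin n)) - 2
        = 0 := by linarith
    have hmm1 : mm p (q.1.1 : EuclideanSpace ℝ (Fin n)) ((q.1.2 : unitInterval) : ℝ) = 1 := by
      rw [mm, hmin, hq, min_self]
    have hPPrr : PP p (q.1.1 : EuclideanSpace ℝ (Fin n)) ((q.1.2 : unitInterval) : ℝ)
        = rr p (q.1.1 : EuclideanSpace ℝ (Fin n)) := by
      rw [PP, hmm1, one_smul]; abel
    rw [hτ0]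
    have hproj : Set.projIcc (0:ℝ) 1 zero_le_one 0 = 0 := Set.projIcc_left _
    rw [hproj, hσ0]
    exact congrArg φ (Subtype.ext hPPrr)

lemma RR_lower (hp : ‖p‖ < 1) : Real.sqrt (2 - ‖p‖^2) - 1 ≤ RR p x := by
  set c := cc p x with hc
  set s1 := Real.sqrt (c^2 + 1 - ‖p‖^2) with hs1
  set s2 := Real.sqrt (2 - ‖p‖^2) with hs2
  have habs : |c| ≤ 1 := abs_cc_le hp.le
  have hc1 : c ≤ 1 := le_trans (le_abs_self c) habs
  have hc2 : -1 ≤ c := by have := neg_abs_le c; linarith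
  have hp2 : ‖p‖^2 < 1 := by nlinarith [norm_nonneg p, hp]
  have hs1sq : s1^2 = c^2 + 1 - ‖p‖^2 := Real.sq_sqrt (by nlinarith [sq_nonneg c])
  have hs2sq : s2^2 = 2 - ‖p‖^2 := Real.sq_sqrt (by nlinarith)
  have hs1n : 0 ≤ s1 := Real.sqrt_nonneg _
  have hs2n : 0 ≤ s2 := Real.sqrt_nonneg _
  have hkey : s1 ≥ s2 * c := by
    rcases le_or_gt c 0 with h | h
    · nlinarith
    · have heq : s1^2 - (s2*c)^2 = (1 - ‖p‖^2) * (1 - c^2) := by rw [hs1sq]; nlinarith [hs2sq]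
      have hrhs : 0 ≤ (1 - ‖p‖^2) * (1 - c^2) :=
        mul_nonneg (by linarith) (by nlinarith)
      nlinarith [mul_nonneg hs2n h.le, heq, hrhs]
  have hfin : s2 + c ≤ s1 + 1 := by nlinarith [sq_nonneg (s1 + 1 + s2 + c), sq_nonneg (s1 + 1 - s2 - c)]
  rw [RR, ← hc, ← hs1]
  linarith

lemma fmap_continuousAt_p (hp : ‖p‖ ≤ 1) (hφc : Continuous φ) (hσc : Continuous σ)
    (hpc : ∀ (h1 : ‖p‖ = 1) (t : unitInterval),
      σ ⟨φ ⟨p, mem_closedBall_zero_iff.2 hp⟩,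
        ⟨⟨p, mem_closedBall_zero_iff.2 hp⟩, h1, rfl⟩⟩ t = φ ⟨p, mem_closedBall_zero_iff.2 hp⟩)
    {x₀ : ↥(Metric.closedBall (0 : EuclideanSpace ℝ (Fin n)) 1)} {t₀ : unitInterval}
    (hx₀ : (x₀ : EuclideanSpace ℝ (Fin n)) = p) :
    ContinuousAt (fmap φ σ p hp) (x₀, t₀) := by
  have hval : fmap φ σ p hp (x₀, t₀) = φ x₀ := fmap_at_p hp hx₀
  rw [ContinuousAt, hval]
  rw [_root_.tendsto_nhds]
  intro V hVopen hVmem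
  -- δ₂ from continuity of φ
  have hφV : φ ⁻¹' V ∈ nhds x₀ := hφc.continuousAt.preimage_mem_nhds (hVopen.mem_nhds hVmem)
  obtain ⟨δ₂, hδ₂pos, hδ₂⟩ := Metric.mem_nhds_iff.1 hφV
  -- δ₁ covering the second branch
  have hδ₁ : ∃ δ₁ > 0, ∀ (z : EuclideanSpace ℝ (Fin n)) (hz : ‖z‖ = 1),
      ‖z - p‖ < δ₁ → ∀ τ' : unitInterval,
        σ ⟨φ ⟨z, mem_closedBall_zero_iff.2 hz.le⟩,
          ⟨⟨z, mem_closedBall_zero_iff.2 hz.le⟩, hz, rfl⟩⟩ τ' ∈ V := by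
    rcases eq_or_lt_of_le hp with hps | hps
    · -- ‖p‖ = 1 : use continuity of σ at the constant path
      have hps' : ‖p‖ = 1 := hps
      set z₀ : ↥(φ '' {x | ‖(x : EuclideanSpace ℝ (Fin n))‖ = 1}) :=
        ⟨φ ⟨p, mem_closedBall_zero_iff.2 hp⟩, ⟨⟨p, mem_closedBall_zero_iff.2 hp⟩, hps', rfl⟩⟩
        with hz₀
      have hU : IsOpen {g : C(unitInterval, M) | Set.MapsTo g Set.univ V} :=
        ContinuousMap.isOpen_setOf_mapsTo isCompact_univ hVopen
      have hx₀' : x₀ = ⟨p, mem_closedBall_zero_iff.2 hp⟩ := Subtype.ext hx₀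
      have hz₀mem : σ z₀ ∈ {g : C(unitInterval, M) | Set.MapsTo g Set.univ V} := by
        intro τ' _
        rw [hpc hps' τ']
        rwa [hx₀'] at hVmem

      have hnb : σ ⁻¹' {g : C(unitInterval, M) | Set.MapsTo g Set.univ V} ∈ nhds z₀ :=
        hσc.continuousAt.preimage_mem_nhds (hU.mem_nhds hz₀mem)
      -- pull back along the sphere inclusion
      set Sph := {w : ↥(Metric.closedBall (0 : EuclideanSpace ℝ (Fin n)) 1) //
        ‖(w : EuclideanSpace ℝ (Fin n))‖ = 1} with hSph
      have hζc : Continuous fun w : Sph =>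
          (⟨φ w.1, ⟨w.1, w.2, rfl⟩⟩ : ↥(φ '' {x | ‖(x : EuclideanSpace ℝ (Fin n))‖ = 1})) :=
        (hφc.comp continuous_subtype_val).subtype_mk _
      have hw₀ : (⟨⟨p, mem_closedBall_zero_iff.2 hp⟩, hps'⟩ : Sph) ∈
          (fun w : Sph => (⟨φ w.1, ⟨w.1, w.2, rfl⟩⟩ :
            ↥(φ '' {x | ‖(x : EuclideanSpace ℝ (Fin n))‖ = 1}))) ⁻¹'
            (σ ⁻¹' {g : C(unitInterval, M) | Set.MapsTo g Set.univ V}) := hz₀mem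
      have hnb2 := (hζc.continuousAt (x := ⟨⟨p, mem_closedBall_zero_iff.2 hp⟩, hps'⟩)).preimage_mem_nhds hnb
      obtain ⟨δ₁, hδ₁pos, hball⟩ := Metric.mem_nhds_iff.1 hnb2
      refine ⟨δ₁, hδ₁pos, fun z hz hzd τ' => ?_⟩
      have hmem : (⟨⟨z, mem_closedBall_zero_iff.2 hz.le⟩, hz⟩ : Sph) ∈
          Metric.ball (⟨⟨p, mem_closedBall_zero_iff.2 hp⟩, hps'⟩ : Sph) δ₁ := by
        rw [Metric.mem_ball, Subtype.dist_eq, Subtype.dist_eq, dist_eq_norm]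
        exact hzd
      exact hball hmem (Set.mem_univ τ')
    · -- ‖p‖ < 1 : second branch impossible near p; any positive δ₁ below η works
      refine ⟨Real.sqrt (2 - ‖p‖^2) - 1, by
        have : (1:ℝ) < 2 - ‖p‖^2 := by nlinarith [norm_nonneg p]
        nlinarith [Real.lt_sqrt (by norm_num : (0:ℝ) ≤ 1) |>.2 (by linarith : (1:ℝ)^2 < 2 - ‖p‖^2)], fun z hz hzd τ' => ?_⟩
      exfalso
      -- a sphere point z with ‖z - p‖ < η contradicts RR_lower
      have h1 := RR_lower (p := p) (x := z) hps
      have h2 := norm_sub_eq_RR hp hz (by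
        intro h
        rw [h] at hz
        exact hps.ne hz)
      rw [← h2] at h1
      linarith
  obtain ⟨δ₁, hδ₁pos, hδ₁⟩ := hδ₁
  set δ := min (δ₂ / 2) (δ₁ / 2) with hδ
  have hδpos : 0 < δ := lt_min (by linarith) (by linarith)
  have hsub : Metric.ball x₀ δ ×ˢ (Set.univ : Set unitInterval) ⊆
      fmap φ σ p hp ⁻¹' V := by
    rintro ⟨x, t⟩ ⟨hxball, -⟩
    have hxd : ‖(x : EuclideanSpace ℝ (Fin n)) - p‖ < δ := by
      rw [Metric.mem_ball, Subtype.dist_eq, hx₀, dist_eq_norm] at hxball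
      exact hxball
    have hx1 : ‖(x : EuclideanSpace ℝ (Fin n))‖ ≤ 1 := mem_closedBall_zero_iff.1 x.2
    have ht0 : (0:ℝ) ≤ (t : ℝ) := t.2.1
    have ht1 : (t : ℝ) ≤ 1 := t.2.2
    simp only [Set.mem_preimage, fmap]
    by_cases hcond : ss p (x : EuclideanSpace ℝ (Fin n)) +
        (t : ℝ) * min (ss p (x : EuclideanSpace ℝ (Fin n))) 2⁻¹ ≤ 1
    · rw [if_pos hcond]
      apply hδ₂
      rw [Metric.mem_ball, Subtype.dist_eq, hx₀, dist_eq_norm]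
      calc ‖PP p (x : EuclideanSpace ℝ (Fin n)) (t : ℝ) - p‖
          ≤ 2 * ‖(x : EuclideanSpace ℝ (Fin n)) - p‖ := dist_PP_le hp hx1 ht0 ht1
      _ < 2 * δ := by linarith
      _ ≤ δ₂ := by
          have : δ ≤ δ₂ / 2 := min_le_left _ _
          linarith
    · have hxp : (x : EuclideanSpace ℝ (Fin n)) ≠ p := by
        intro h
        apply hcond
        rw [h, ss_self]
        simp
      rw [if_neg hcond, dif_pos (norm_rr hp hxp)]
      have hsgt : 2⁻¹ < ss p (x : EuclideanSpace ℝ (Fin n)) := by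
        by_contra hle
        push_neg at hle
        apply hcond
        have hm : min (ss p (x : EuclideanSpace ℝ (Fin n))) 2⁻¹ ≤ 2⁻¹ := min_le_right _ _
        have hs0 := ss_nonneg (p := p) (x := (x : EuclideanSpace ℝ (Fin n))) hp
        have h3 : (0:ℝ) ≤ min (ss p (x : EuclideanSpace ℝ (Fin n))) 2⁻¹ := le_min hs0 (by norm_num)
        nlinarith
      have hRpos := RR_pos hp hx1 hxp
      have hRlt : RR p (x : EuclideanSpace ℝ (Fin n)) < 2 * ‖(x : EuclideanSpace ℝ (Fin n)) - p‖ := by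
        have : ss p (x : EuclideanSpace ℝ (Fin n)) * RR p (x : EuclideanSpace ℝ (Fin n))
            = ‖(x : EuclideanSpace ℝ (Fin n)) - p‖ := by
          rw [ss, div_mul_cancel₀ _ hRpos.ne']
        nlinarith
      have hrrd : ‖rr p (x : EuclideanSpace ℝ (Fin n)) - p‖ < δ₁ := by
        have : rr p (x : EuclideanSpace ℝ (Fin n)) - p
            = RR p (x : EuclideanSpace ℝ (Fin n)) • uv p (x : EuclideanSpace ℝ (Fin n)) := by
          rw [rr, add_sub_cancel_left]
        rw [this, norm_smul, Real.norm_eq_abs, abs_of_nonneg (RR_nonneg hp), norm_uv hxp, mul_one]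
        have hd1 : δ ≤ δ₁ / 2 := min_le_right _ _
        linarith
      exact hδ₁ _ (norm_rr hp hxp) hrrd _
  have : Metric.ball x₀ δ ×ˢ (Set.univ : Set unitInterval) ∈ nhds (x₀, t₀) :=
    prod_mem_nhds (Metric.ball_mem_nhds x₀ hδpos) Filter.univ_mem
  exact Filter.mem_of_superset this hsub

lemma fmap_continuous (hp : ‖p‖ ≤ 1) (hφc : Continuous φ) (hσc : Continuous σ)
    (hσ0 : ∀ y, σ y 0 = (y : M))
    (hpc : ∀ (h1 : ‖p‖ = 1) (t : unitInterval),
      σ ⟨φ ⟨p, mem_closedBall_zero_iff.2 hp⟩,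
        ⟨⟨p, mem_closedBall_zero_iff.2 hp⟩, h1, rfl⟩⟩ t = φ ⟨p, mem_closedBall_zero_iff.2 hp⟩) :
    Continuous (fmap φ σ p hp) := by
  rw [continuous_iff_continuousAt]
  rintro ⟨x, t⟩
  by_cases hx : (x : EuclideanSpace ℝ (Fin n)) = p
  · exact fmap_continuousAt_p hp hφc hσc hpc hx
  · have hopen : IsOpen {q : ↥(Metric.closedBall (0 : EuclideanSpace ℝ (Fin n)) 1) × unitInterval |
        (q.1 : EuclideanSpace ℝ (Fin n)) ≠ p} :=
      IsOpen.preimage (continuous_subtype_val.comp continuous_fst) isOpen_compl_singleton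
    exact (fmap_continuousOn hp hφc hσc hσ0).continuousAt (hopen.mem_nhds hx)

lemma main_construction {A : Set M}
    {φ : ↥(Metric.closedBall (0 : EuclideanSpace ℝ (Fin n)) 1) → M}
    (hφ : Topology.IsEmbedding φ)
    {σ : ↥(φ '' {x | ‖(x : EuclideanSpace ℝ (Fin n))‖ = 1}) → C(unitInterval, M)}
    (hσc : Continuous σ) (hσ0 : ∀ y, σ y 0 = (y : M))
    (hσA : ∀ (y) (t : unitInterval), σ y t ∈ A)
    (hσnash : ∀ y, (∀ t : unitInterval, σ y t = (y : M)) ∨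
      (∀ t : unitInterval, σ y t = (y : M) → t = 0))
    (hint : ∀ x : ↥(Metric.closedBall (0 : EuclideanSpace ℝ (Fin n)) 1),
      ‖(x : EuclideanSpace ℝ (Fin n))‖ < 1 → φ x ∉ A)
    (p : EuclideanSpace ℝ (Fin n)) (hp : ‖p‖ ≤ 1)
    (hpc : ∀ (h1 : ‖p‖ = 1) (t : unitInterval),
      σ ⟨φ ⟨p, mem_closedBall_zero_iff.2 hp⟩,
        ⟨⟨p, mem_closedBall_zero_iff.2 hp⟩, h1, rfl⟩⟩ t = φ ⟨p, mem_closedBall_zero_iff.2 hp⟩) :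
    ∃ σ' : (Set.range φ) → C(unitInterval, M),
      Continuous σ' ∧
      (∀ y, σ' y 0 = (y : M)) ∧
      (∀ (y : M) (hy : y ∈ φ '' {x | ‖(x : EuclideanSpace ℝ (Fin n))‖ = 1})
        (hy' : y ∈ Set.range φ), σ' ⟨y, hy'⟩ = σ ⟨y, hy⟩) ∧
      (∀ y, (∀ t : unitInterval, σ' y t = (y : M)) ∨
        (∀ t : unitInterval, σ' y t = (y : M) → t = 0)) ∧
      (∀ y : (Set.range φ), (y : M) ∈ φ '' {x | ‖(x : EuclideanSpace ℝ (Fin n))‖ < 1} →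
        (y : M) ≠ φ ⟨p, mem_closedBall_zero_iff.2 hp⟩ → ∃ t : unitInterval, σ' y t ≠ (y : M)) := by
  have hφc := hφ.continuous
  have hinj := hφ.injective
  set e := hφ.toHomeomorph with he
  have hkey : ∀ y : Set.range φ, φ (e.symm y) = (y : M) := by
    intro y
    exact congrArg Subtype.val (e.apply_symm_apply y)
  set F : C(↥(Metric.closedBall (0 : EuclideanSpace ℝ (Fin n)) 1) × unitInterval, M) :=
    ⟨fmap φ σ p hp, fmap_continuous hp hφc hσc hσ0 hpc⟩ with hF
  refine ⟨fun y => F.curry (e.symm y), ?_, ?_, ?_, ?_, ?_⟩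
  · exact F.curry.continuous.comp e.symm.continuous
  · intro y
    show fmap φ σ p hp (e.symm y, 0) = (y : M)
    rw [fmap_zero hp, hkey]
  · intro y hy hy'
    rcases id hy with ⟨x₀, hx₀mem, hx₀⟩
    have hxeq : e.symm ⟨y, hy'⟩ = x₀ := hinj (by rw [hkey ⟨y, hy'⟩, hx₀])
    have hb : ‖((e.symm ⟨y, hy'⟩ : ↥(Metric.closedBall (0 : EuclideanSpace ℝ (Fin n)) 1)) :
        EuclideanSpace ℝ (Fin n))‖ = 1 := by rw [hxeq]; exact hx₀mem
    ext t
    show fmap φ σ p hp (e.symm ⟨y, hy'⟩, t) = σ ⟨y, hy⟩ t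
    by_cases hxp : ((e.symm ⟨y, hy'⟩ : ↥(Metric.closedBall (0 : EuclideanSpace ℝ (Fin n)) 1)) :
        EuclideanSpace ℝ (Fin n)) = p
    · rw [fmap_at_p hp hxp]
      have h1 : ‖p‖ = 1 := by rw [← hxp]; exact hb
      have harg : (⟨y, hy⟩ : ↥(φ '' {x | ‖(x : EuclideanSpace ℝ (Fin n))‖ = 1}))
          = ⟨φ ⟨p, mem_closedBall_zero_iff.2 hp⟩,
            ⟨⟨p, mem_closedBall_zero_iff.2 hp⟩, h1, rfl⟩⟩ := by
        refine Subtype.ext ?_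
        show y = φ ⟨p, mem_closedBall_zero_iff.2 hp⟩
        exact (hkey ⟨y, hy'⟩).symm.trans (congrArg φ (Subtype.ext hxp))
      rw [harg, hpc h1 t]
      exact congrArg φ (Subtype.ext hxp)
    · rw [fmap_boundary hp hσ0 hb hxp]
      have harg : (⟨φ (e.symm ⟨y, hy'⟩), ⟨e.symm ⟨y, hy'⟩, hb, rfl⟩⟩ :
          ↥(φ '' {x | ‖(x : EuclideanSpace ℝ (Fin n))‖ = 1})) = ⟨y, hy⟩ :=
        Subtype.ext (hkey ⟨y, hy'⟩)
      rw [harg]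
  · intro y
    set x := e.symm y with hx
    have hx1 : ‖(x : EuclideanSpace ℝ (Fin n))‖ ≤ 1 := mem_closedBall_zero_iff.1 x.2
    by_cases hxp : (x : EuclideanSpace ℝ (Fin n)) = p
    · left
      intro t
      show fmap φ σ p hp (x, t) = (y : M)
      rw [fmap_at_p hp hxp, hkey]
    · rcases lt_or_eq_of_le hx1 with hlt | hb
      · right
        intro t ht
        refine fmap_nash hp hinj hlt hxp hσA (hint x hlt) ?_
        show fmap φ σ p hp (x, t) = φ x
        rw [show fmap φ σ p hp (x, t) = (y:M) from ht, ← hkey y]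
      · rcases hσnash ⟨φ x, ⟨x, hb, rfl⟩⟩ with h | h
        · left
          intro t
          show fmap φ σ p hp (x, t) = (y : M)
          rw [fmap_boundary hp hσ0 hb hxp, h]
          exact hkey y
        · right
          intro t ht
          refine h t ?_
          show σ ⟨φ x, ⟨x, hb, rfl⟩⟩ t = φ x
          rw [← fmap_boundary hp hσ0 hb hxp]
          show fmap φ σ p hp (x, t) = φ x
          rw [show fmap φ σ p hp (x, t) = (y:M) from ht, ← hkey y]
  · intro y hy hyne
    set x := e.symm y with hx
    obtain ⟨x₀, hx₀mem, hx₀⟩ := hy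
    have hxeq : x = x₀ := hinj (by rw [hkey y, hx₀])
    have hlt : ‖(x : EuclideanSpace ℝ (Fin n))‖ < 1 := by rw [hxeq]; exact hx₀mem
    have hxp : (x : EuclideanSpace ℝ (Fin n)) ≠ p := by
      intro h
      apply hyne
      rw [← hkey y]
      exact congrArg φ (Subtype.ext h)
    refine ⟨1, ?_⟩
    intro ht
    refine fmap_one_ne hp hinj hlt hxp hσA (hint x hlt) ?_
    show fmap φ σ p hp (x, 1) = φ x
    rw [show fmap φ σ p hp (x, 1) = (y:M) from ht, ← hkey y]

end Top
end PFE

theorem path_field_extension_over_cell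
    {n : ℕ} (hn : 1 ≤ n) {M : Type*} [TopologicalSpace M] [T2Space M] (A : Set M)
    (φ : (Metric.closedBall (0 : EuclideanSpace ℝ (Fin n)) 1) → M)
    (hφ : Topology.IsEmbedding φ)
    (hbd : ∀ x : (Metric.closedBall (0 : EuclideanSpace ℝ (Fin n)) 1),
      ‖(x : EuclideanSpace ℝ (Fin n))‖ = 1 → φ x ∈ A)
    (hint : ∀ x : (Metric.closedBall (0 : EuclideanSpace ℝ (Fin n)) 1),
      ‖(x : EuclideanSpace ℝ (Fin n))‖ < 1 → φ x ∉ A)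
    (σ : (φ '' {x | ‖(x : EuclideanSpace ℝ (Fin n))‖ = 1}) → C(unitInterval, M))
    (hσc : Continuous σ)
    (hσ0 : ∀ y, σ y 0 = (y : M))
    (hσA : ∀ (y) (t : unitInterval), σ y t ∈ A)
    (hσnash : ∀ y, (∀ t : unitInterval, σ y t = (y : M)) ∨
      (∀ t : unitInterval, σ y t = (y : M) → t = 0))
    (o : M) (ho : o ∈ φ '' {x | ‖(x : EuclideanSpace ℝ (Fin n))‖ < 1}) :
    ∃ σ' : (Set.range φ) → C(unitInterval, M),
      Continuous σ' ∧
      (∀ y, σ' y 0 = (y : M)) ∧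
      (∀ (y : M) (hy : y ∈ φ '' {x | ‖(x : EuclideanSpace ℝ (Fin n))‖ = 1})
        (hy' : y ∈ Set.range φ), σ' ⟨y, hy'⟩ = σ ⟨y, hy⟩) ∧
      (∀ y, (∀ t : unitInterval, σ' y t = (y : M)) ∨
        (∀ t : unitInterval, σ' y t = (y : M) → t = 0)) ∧
      (∀ y : (Set.range φ), (y : M) ∈ φ '' {x | ‖(x : EuclideanSpace ℝ (Fin n))‖ < 1} →
        (y : M) ≠ o → ∃ t : unitInterval, σ' y t ≠ (y : M)) ∧
      ((∃ y₀, ∀ t : unitInterval, σ y₀ t = (y₀ : M)) →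
        ∀ y : (Set.range φ), (y : M) ∈ φ '' {x | ‖(x : EuclideanSpace ℝ (Fin n))‖ < 1} →
          ∃ t : unitInterval, σ' y t ≠ (y : M)) := by
  classical
  obtain ⟨a, ha, hao⟩ := ho
  by_cases hsing : ∃ y₀, ∀ t : unitInterval, σ y₀ t = (y₀ : M)
  · -- there is a singularity on the boundary: take p there
    obtain ⟨y₀, hy₀⟩ := hsing
    rcases id y₀.2 with ⟨x₀, hx₀mem, hx₀⟩
    have hx₀n : ‖(x₀ : EuclideanSpace ℝ (Fin n))‖ = 1 := hx₀mem
    have hp : ‖(x₀ : EuclideanSpace ℝ (Fin n))‖ ≤ 1 := hx₀n.le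
    have hpc : ∀ (h1 : ‖(x₀ : EuclideanSpace ℝ (Fin n))‖ = 1) (t : unitInterval),
        σ ⟨φ ⟨(x₀ : EuclideanSpace ℝ (Fin n)), mem_closedBall_zero_iff.2 hp⟩,
          ⟨⟨(x₀ : EuclideanSpace ℝ (Fin n)), mem_closedBall_zero_iff.2 hp⟩, h1, rfl⟩⟩ t
          = φ ⟨(x₀ : EuclideanSpace ℝ (Fin n)), mem_closedBall_zero_iff.2 hp⟩ := by
      intro h1 t
      have harg : (⟨φ ⟨(x₀ : EuclideanSpace ℝ (Fin n)), mem_closedBall_zero_iff.2 hp⟩,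
          ⟨⟨(x₀ : EuclideanSpace ℝ (Fin n)), mem_closedBall_zero_iff.2 hp⟩, h1, rfl⟩⟩ :
          ↥(φ '' {x | ‖(x : EuclideanSpace ℝ (Fin n))‖ = 1})) = y₀ := by
        refine Subtype.ext ?_
        show φ ⟨(x₀ : EuclideanSpace ℝ (Fin n)), mem_closedBall_zero_iff.2 hp⟩ = (y₀ : M)
        rw [← hx₀]
      rw [harg, hy₀ t, ← hx₀]
    obtain ⟨σ', hc1, hc2, hc3, hc4, hc5⟩ :=
      main_construction hφ hσc hσ0 hσA hσnash hint (x₀ : EuclideanSpace ℝ (Fin n)) hp hpc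
    have hne : ∀ y : (Set.range φ),
        (y : M) ∈ φ '' {x | ‖(x : EuclideanSpace ℝ (Fin n))‖ < 1} →
        (y : M) ≠ φ ⟨(x₀ : EuclideanSpace ℝ (Fin n)), mem_closedBall_zero_iff.2 hp⟩ := by
      intro y hy hcon
      rcases id hy with ⟨x', hx'mem, hx'⟩
      have hyA : (y : M) ∉ A := by rw [← hx']; exact hint x' hx'mem
      have hpA : φ (⟨(x₀ : EuclideanSpace ℝ (Fin n)), mem_closedBall_zero_iff.2 hp⟩ :
          ↥(Metric.closedBall (0 : EuclideanSpace ℝ (Fin n)) 1)) ∈ A := hbd _ hx₀n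
      exact hyA (hcon ▸ hpA)
    exact ⟨σ', hc1, hc2, hc3, hc4,
      fun y hy _ => hc5 y hy (hne y hy),
      fun _ y hy => hc5 y hy (hne y hy)⟩
  · -- no singularity on the boundary: take p = a (the preimage of o)
    have hlt : ‖(a : EuclideanSpace ℝ (Fin n))‖ < 1 := ha
    have hp : ‖(a : EuclideanSpace ℝ (Fin n))‖ ≤ 1 := hlt.le
    have hpc : ∀ (h1 : ‖(a : EuclideanSpace ℝ (Fin n))‖ = 1) (t : unitInterval),
        σ ⟨φ ⟨(a : EuclideanSpace ℝ (Fin n)), mem_closedBall_zero_iff.2 hp⟩,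
          ⟨⟨(a : EuclideanSpace ℝ (Fin n)), mem_closedBall_zero_iff.2 hp⟩, h1, rfl⟩⟩ t
          = φ ⟨(a : EuclideanSpace ℝ (Fin n)), mem_closedBall_zero_iff.2 hp⟩ :=
      fun h1 => absurd h1 (ne_of_lt hlt)
    obtain ⟨σ', hc1, hc2, hc3, hc4, hc5⟩ :=
      main_construction hφ hσc hσ0 hσA hσnash hint (a : EuclideanSpace ℝ (Fin n)) hp hpc
    refine ⟨σ', hc1, hc2, hc3, hc4, ?_, ?_⟩
    · intro y hy hyne
      apply hc5 y hy
      intro hcon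
      apply hyne
      rw [hcon, ← hao]
    · intro hexists
      exact absurd hexists hsing
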